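/- arXiv:2007.04202 — 2 statements merged into one kernel-verified Lean document; each statement's English description precedes it below -/
import Mathlib

section
/- For the stochastic bilinear game with A ≠ 0, assume the solution set X* = {x ∈ ℝ^d : ξ(x) = 0} is nonempty. Then min H = 0, X* is exactly the set of minimizers of H, and H is σ_min(A)²-quasi-strongly convex, where σ_min(A) is the smallest nonzero singular value of A: for every x ∈ ℝ^d, writing x̄ for the orthogonal projection of x onto X* (a nonempty affine subspace), one has 0 = H(x̄) ≥ H(x) + ⟨∇H(x), x̄ − x⟩ + (σ_min(A)²/2)‖x̄ − x‖². -/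
/-!
STATEMENT 1: For the stochastic bilinear game with A ≠ 0 and nonempty solution set
X* = {x : ξ(x) = 0}: min H = 0, X* is exactly the set of minimizers of H, and H is
σ_min(A)²-quasi-strongly convex with respect to the orthogonal projection onto X*.
-/

open scoped RealInnerProductSpace BigOperators

noncomputable section

/-- Squared smallest nonzero singular value of A, i.e. the smallest nonzero
eigenvalue of Aᵀ A. -/
def sigmaMinSq {d1 d2 : ℕ} (A : Matrix (Fin d1) (Fin d2) ℝ) : ℝ :=
  sInf {t : ℝ | t ≠ 0 ∧ ∃ v : Fin d2 → ℝ, v ≠ 0 ∧ (A.transpose * A).mulVec v = t • v}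

/-- The signed gradient field ξ(x) = (A x₂ + b, −(Aᵀ x₁ + c)) of the bilinear game. -/
def xiBar {d1 d2 : ℕ} (A : Matrix (Fin d1) (Fin d2) ℝ) (b : Fin d1 → ℝ) (c : Fin d2 → ℝ)
    (x : EuclideanSpace ℝ (Fin d1 ⊕ Fin d2)) : EuclideanSpace ℝ (Fin d1 ⊕ Fin d2) :=
  (WithLp.equiv 2 _).symm (Sum.elim
    (fun a => A.mulVec (fun j => x (Sum.inr j)) a + b a)
    (fun j => -(A.transpose.mulVec (fun a => x (Sum.inl a)) j + c j)))

/-- The Hamiltonian H(x) = ½‖ξ(x)‖². -/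
def Ham {d1 d2 : ℕ} (A : Matrix (Fin d1) (Fin d2) ℝ) (b : Fin d1 → ℝ) (c : Fin d2 → ℝ)
    (x : EuclideanSpace ℝ (Fin d1 ⊕ Fin d2)) : ℝ :=
  (1 / 2 : ℝ) * ‖xiBar A b c x‖ ^ 2

namespace BG

variable {d1 d2 : ℕ}

abbrev E (d1 d2 : ℕ) := EuclideanSpace ℝ (Fin d1 ⊕ Fin d2)

def Lfun (A : Matrix (Fin d1) (Fin d2) ℝ) (x : E d1 d2) : E d1 d2 :=
  (WithLp.equiv 2 _).symm (Sum.elim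
    (fun a => A.mulVec (fun j => x (Sum.inr j)) a)
    (fun j => -(A.transpose.mulVec (fun a => x (Sum.inl a)) j)))

lemma Lfun_inl (A : Matrix (Fin d1) (Fin d2) ℝ) (x : E d1 d2) (a : Fin d1) :
    Lfun A x (Sum.inl a) = ∑ j, A a j * x (Sum.inr j) := rfl

lemma Lfun_inr (A : Matrix (Fin d1) (Fin d2) ℝ) (x : E d1 d2) (j : Fin d2) :
    Lfun A x (Sum.inr j) = -∑ a, A a j * x (Sum.inl a) := by
  simp [Lfun, Matrix.mulVec, dotProduct, Matrix.transpose_apply]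

lemma xiBar_inl (A : Matrix (Fin d1) (Fin d2) ℝ) (b : Fin d1 → ℝ) (c : Fin d2 → ℝ)
    (x : E d1 d2) (a : Fin d1) :
    xiBar A b c x (Sum.inl a) = (∑ j, A a j * x (Sum.inr j)) + b a := rfl

lemma xiBar_inr (A : Matrix (Fin d1) (Fin d2) ℝ) (b : Fin d1 → ℝ) (c : Fin d2 → ℝ)
    (x : E d1 d2) (j : Fin d2) :
    xiBar A b c x (Sum.inr j) = -((∑ a, A a j * x (Sum.inl a)) + c j) := by
  simp [xiBar, Matrix.mulVec, dotProduct, Matrix.transpose_apply]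

def LL (A : Matrix (Fin d1) (Fin d2) ℝ) : E d1 d2 →ₗ[ℝ] E d1 d2 where
  toFun := Lfun A
  map_add' x y := by
    ext i
    cases i with
    | inl a => simp [PiLp.add_apply, Lfun_inl, mul_add, Finset.sum_add_distrib]
    | inr j => simp [PiLp.add_apply, Lfun_inr, mul_add, Finset.sum_add_distrib]; ring
  map_smul' r x := by
    ext i
    cases i with
    | inl a => simp [PiLp.smul_apply, Lfun_inl, Finset.mul_sum, smul_eq_mul]
               exact Finset.sum_congr rfl fun j _ => by ring
    | inr j => simp [PiLp.smul_apply, Lfun_inr, Finset.mul_sum, smul_eq_mul]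
               exact Finset.sum_congr rfl fun a _ => by ring

def Lc (A : Matrix (Fin d1) (Fin d2) ℝ) : E d1 d2 →L[ℝ] E d1 d2 :=
  LinearMap.toContinuousLinearMap (LL A)

lemma Lc_apply (A : Matrix (Fin d1) (Fin d2) ℝ) (x : E d1 d2) : Lc A x = Lfun A x := rfl

lemma Lfun_smul (A : Matrix (Fin d1) (Fin d2) ℝ) (t : ℝ) (x : E d1 d2) :
    Lfun A (t • x) = t • Lfun A x := map_smul (LL A) t x

lemma skew (A : Matrix (Fin d1) (Fin d2) ℝ) (u v : E d1 d2) :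
    ⟪Lfun A u, v⟫ = -⟪u, Lfun A v⟫ := by
  simp only [PiLp.inner_apply, RCLike.inner_apply, starRingEnd_apply, star_trivial,
    Fintype.sum_sum_type, Lfun_inl, Lfun_inr]
  simp only [Finset.sum_mul, Finset.mul_sum, neg_mul, mul_neg, neg_neg,
    Finset.sum_neg_distrib, neg_add, ← Finset.sum_sub_distrib]
  rw [Finset.sum_comm]
  have h1 : ∑ y : Fin d2, ∑ x : Fin d1, A x y * u (Sum.inr y) * v (Sum.inl x)
      = ∑ x : Fin d2, ∑ i : Fin d1, u (Sum.inr x) * (A i x * v (Sum.inl i)) :=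
    Finset.sum_congr rfl fun _ _ => Finset.sum_congr rfl fun _ _ => by ring
  have h2 : ∑ x : Fin d2, ∑ i : Fin d1, A i x * u (Sum.inl i) * v (Sum.inr x)
      = ∑ x : Fin d1, ∑ i : Fin d2, u (Sum.inl x) * (A x i * v (Sum.inr i)) := by
    rw [Finset.sum_comm]
    exact Finset.sum_congr rfl fun _ _ => Finset.sum_congr rfl fun _ _ => by ring
  have h3 : ∑ x : Fin d2, ∑ i : Fin d1, v (Sum.inr x) * (A i x * u (Sum.inl i))
      = ∑ x : Fin d1, ∑ i : Fin d2, A x i * v (Sum.inr i) * u (Sum.inl x) := by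
    rw [Finset.sum_comm]
    exact Finset.sum_congr rfl fun _ _ => Finset.sum_congr rfl fun _ _ => by ring
  have h4 : ∑ y : Fin d2, ∑ x : Fin d1, v (Sum.inl x) * (A x y * u (Sum.inr y))
      = ∑ x : Fin d2, ∑ i : Fin d1, A i x * v (Sum.inl i) * u (Sum.inr x) :=
    Finset.sum_congr rfl fun _ _ => Finset.sum_congr rfl fun _ _ => by ring
  linarith [h3, h4]

lemma xi_eq (A : Matrix (Fin d1) (Fin d2) ℝ) (b : Fin d1 → ℝ) (c : Fin d2 → ℝ) :
    xiBar A b c = fun y => Lc A y + xiBar A b c 0 := by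
  funext y
  ext i
  cases i with
  | inl a =>
      simp only [PiLp.add_apply, Lc_apply, xiBar_inl, Lfun_inl]
      simp
  | inr j =>
      simp only [PiLp.add_apply, Lc_apply, xiBar_inr, Lfun_inr]
      simp
      ring

lemma xi_sub (A : Matrix (Fin d1) (Fin d2) ℝ) (b : Fin d1 → ℝ) (c : Fin d2 → ℝ)
    (x y : E d1 d2) :
    xiBar A b c x - xiBar A b c y = Lfun A (x - y) := by
  have hx := congrFun (xi_eq A b c) x
  have hy := congrFun (xi_eq A b c) y
  rw [hx, hy, ← Lc_apply, map_sub]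
  abel

lemma hasGradient (A : Matrix (Fin d1) (Fin d2) ℝ) (b : Fin d1 → ℝ) (c : Fin d2 → ℝ)
    (x : E d1 d2) :
    HasGradientAt (Ham A b c) (-(Lfun A (xiBar A b c x))) x := by
  rw [hasGradientAt_iff_hasFDerivAt]
  have hd : HasFDerivAt (xiBar A b c) (Lc A) x := by
    rw [xi_eq A b c]; exact (Lc A).hasFDerivAt.add_const _
  have h2 := (hd.inner ℝ hd).const_mul (1 / 2 : ℝ)
  have hH : Ham A b c = fun y => (1 / 2 : ℝ) * ⟪xiBar A b c y, xiBar A b c y⟫ := by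
    funext y; rw [Ham, real_inner_self_eq_norm_sq]
  rw [hH]
  refine h2.congr_fderiv ?_
  apply ContinuousLinearMap.ext
  intro h
  simp only [InnerProductSpace.toDual_apply_apply, ContinuousLinearMap.smul_apply,
    ContinuousLinearMap.comp_apply, ContinuousLinearMap.prod_apply, fderivInnerCLM_apply,
    smul_eq_mul]
  rw [inner_neg_left, skew, Lc_apply, real_inner_comm (Lfun A h) (xiBar A b c x)]
  ring

def SL (A : Matrix (Fin d1) (Fin d2) ℝ) : E d1 d2 →ₗ[ℝ] E d1 d2 :=
  -((LL A) ∘ₗ (LL A))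

lemma SL_apply (A : Matrix (Fin d1) (Fin d2) ℝ) (x : E d1 d2) :
    SL A x = -(Lfun A (Lfun A x)) := rfl

lemma hSym (A : Matrix (Fin d1) (Fin d2) ℝ) : (SL A).IsSymmetric := by
  intro u v
  rw [SL_apply, SL_apply, inner_neg_left, inner_neg_right, skew, neg_neg,
    skew A u (Lfun A v)]

lemma SSelf (A : Matrix (Fin d1) (Fin d2) ℝ) (u : E d1 d2) :
    ⟪SL A u, u⟫ = ‖Lfun A u‖ ^ 2 := by
  rw [SL_apply, inner_neg_left, skew, neg_neg, real_inner_self_eq_norm_sq]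

lemma S_inr (A : Matrix (Fin d1) (Fin d2) ℝ) (x : E d1 d2) (j : Fin d2) :
    SL A x (Sum.inr j) = (A.transpose * A).mulVec (fun i => x (Sum.inr i)) j := by
  rw [SL_apply]
  have h : (-(Lfun A (Lfun A x))) (Sum.inr j) = -(Lfun A (Lfun A x) (Sum.inr j)) := rfl
  rw [h, Lfun_inr, neg_neg]
  simp only [Lfun_inl]
  rw [Matrix.mulVec, dotProduct]
  simp only [Matrix.mul_apply, Matrix.transpose_apply, Finset.sum_mul, Finset.mul_sum]
  rw [Finset.sum_comm]
  exact Finset.sum_congr rfl fun _ _ => Finset.sum_congr rfl fun _ _ => by ring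

lemma S_inl (A : Matrix (Fin d1) (Fin d2) ℝ) (x : E d1 d2) (a : Fin d1) :
    SL A x (Sum.inl a) = (A * A.transpose).mulVec (fun i => x (Sum.inl i)) a := by
  rw [SL_apply]
  have h : (-(Lfun A (Lfun A x))) (Sum.inl a) = -(Lfun A (Lfun A x) (Sum.inl a)) := rfl
  rw [h, Lfun_inl]
  simp only [Lfun_inr, mul_neg]
  rw [Matrix.mulVec, dotProduct]
  simp only [Matrix.mul_apply, Matrix.transpose_apply, Finset.sum_mul, Finset.mul_sum,
    Finset.sum_neg_distrib, neg_neg]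
  rw [Finset.sum_comm]
  exact Finset.sum_congr rfl fun _ _ => Finset.sum_congr rfl fun _ _ => by ring

lemma eig_nonneg (A : Matrix (Fin d1) (Fin d2) ℝ) {t : ℝ} {v : Fin d2 → ℝ} (hv : v ≠ 0)
    (h : (A.transpose * A).mulVec v = t • v) : 0 ≤ t := by
  have h1 : 0 ≤ dotProduct v ((A.transpose * A).mulVec v) := by
    rw [← Matrix.mulVec_mulVec, Matrix.dotProduct_mulVec, Matrix.vecMul_transpose]
    exact Finset.sum_nonneg fun i _ => mul_self_nonneg _
  rw [h] at h1
  have h2 : dotProduct v (t • v) = t * dotProduct v v := by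
    simp [dotProduct, Finset.mul_sum]; exact Finset.sum_congr rfl fun _ _ => by ring
  rw [h2] at h1
  have h3 : 0 < dotProduct v v := by
    rcases lt_or_eq_of_le (Finset.sum_nonneg fun i (_ : i ∈ Finset.univ) =>
      mul_self_nonneg (v i)) with h | h
    · exact h
    · exact absurd (dotProduct_self_eq_zero.mp h.symm) hv
  nlinarith

lemma spec (A : Matrix (Fin d1) (Fin d2) ℝ) (u : E d1 d2)
    (hu : ∀ w : E d1 d2, Lfun A w = 0 → ⟪w, u⟫ = 0) :
    sigmaMinSq A * ‖u‖ ^ 2 ≤ ‖Lfun A u‖ ^ 2 := by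
  have hn : Module.finrank ℝ (E d1 d2) = Fintype.card (Fin d1 ⊕ Fin d2) :=
    finrank_euclideanSpace
  set B := (hSym A).eigenvectorBasis hn with hB
  set μ := (hSym A).eigenvalues hn with hμdef
  have happ : ∀ i, SL A (B i) = μ i • B i := fun i => (hSym A).apply_eigenvectorBasis hn i
  have hBdd : BddBelow {t : ℝ | t ≠ 0 ∧ ∃ v : Fin d2 → ℝ, v ≠ 0 ∧
      (A.transpose * A).mulVec v = t • v} := by
    refine ⟨0, fun t ht => ?_⟩
    obtain ⟨-, v, hv, hvt⟩ := ht
    exact eig_nonneg A hv hvt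
  have hle : ∀ i, μ i ≠ 0 → sigmaMinSq A ≤ μ i := by
    intro i hμ0
    apply csInf_le hBdd
    set e := B i with he
    have heS : SL A e = μ i • e := happ i
    have h2 : (A.transpose * A).mulVec (fun j => e (Sum.inr j))
        = μ i • (fun j => e (Sum.inr j)) := by
      funext j
      have hc : SL A e (Sum.inr j) = (μ i • e) (Sum.inr j) := by rw [heS]
      rw [S_inr] at hc
      rw [hc]
      simp [PiLp.smul_apply]
    by_cases h0 : (fun j => e (Sum.inr j)) = 0
    · have he1 : (fun a => e (Sum.inl a)) ≠ 0 := by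
        intro hc
        have he0 : e = 0 := by
          ext i0
          cases i0 with
          | inl a => exact congrFun hc a
          | inr j => exact congrFun h0 j
        have hnorm := B.orthonormal.1 i
        rw [← he, he0] at hnorm
        simp at hnorm
      have hAAT : (A * A.transpose).mulVec (fun a => e (Sum.inl a))
          = μ i • (fun a => e (Sum.inl a)) := by
        funext a
        have hc : SL A e (Sum.inl a) = (μ i • e) (Sum.inl a) := by rw [heS]
        rw [S_inl] at hc
        rw [hc]
        simp [PiLp.smul_apply]
      set v := A.transpose.mulVec (fun a => e (Sum.inl a)) with hv
      have hvne : v ≠ 0 := by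
        intro hc
        have hz : (A * A.transpose).mulVec (fun a => e (Sum.inl a)) = 0 := by
          rw [← Matrix.mulVec_mulVec, ← hv, hc, Matrix.mulVec_zero]
        rw [hAAT] at hz
        exact smul_ne_zero hμ0 he1 hz
      refine ⟨hμ0, v, hvne, ?_⟩
      calc (A.transpose * A).mulVec v
          = A.transpose.mulVec (A.mulVec (A.transpose.mulVec (fun a => e (Sum.inl a)))) := by
            simp only [hv, Matrix.mulVec_mulVec, Matrix.mul_assoc]
        _ = A.transpose.mulVec ((A * A.transpose).mulVec (fun a => e (Sum.inl a))) := by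
            simp only [Matrix.mulVec_mulVec, Matrix.mul_assoc]
        _ = A.transpose.mulVec (μ i • (fun a => e (Sum.inl a))) := by rw [hAAT]
        _ = μ i • v := by rw [Matrix.mulVec_smul, hv]
    · exact ⟨hμ0, _, h0, h2⟩
  have expS : ⟪SL A u, u⟫ = ∑ i, μ i * (⟪u, B i⟫ * ⟪B i, u⟫) := by
    rw [← B.sum_inner_mul_inner (SL A u) u]
    refine Finset.sum_congr rfl fun i _ => ?_
    rw [hSym A u (B i), happ i, real_inner_smul_right]
    ring
  have expU : ⟪u, u⟫ = ∑ i, ⟪u, B i⟫ * ⟪B i, u⟫ := (B.sum_inner_mul_inner u u).symm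
  have hterm : ∀ i ∈ Finset.univ,
      sigmaMinSq A * (⟪u, B i⟫ * ⟪B i, u⟫) ≤ μ i * (⟪u, B i⟫ * ⟪B i, u⟫) := by
    intro i _
    by_cases hμ0 : μ i = 0
    · have hSB : SL A (B i) = 0 := by rw [happ i, hμ0, zero_smul]
      have hLB : Lfun A (B i) = 0 := by
        have h4 : ‖Lfun A (B i)‖ ^ 2 = 0 := by rw [← SSelf, hSB, inner_zero_left]
        exact norm_eq_zero.mp (pow_eq_zero_iff (two_ne_zero) |>.mp h4)
      have h5 : ⟪B i, u⟫ = 0 := hu _ hLB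
      rw [h5, hμ0]
      simp
    · have h6 := hle i hμ0
      have hsq : 0 ≤ ⟪u, B i⟫ * ⟪B i, u⟫ := by
        rw [real_inner_comm (B i) u]; exact mul_self_nonneg _
      exact mul_le_mul_of_nonneg_right h6 hsq
  calc sigmaMinSq A * ‖u‖ ^ 2
      = ∑ i, sigmaMinSq A * (⟪u, B i⟫ * ⟪B i, u⟫) := by
        rw [← real_inner_self_eq_norm_sq, expU, Finset.mul_sum]
    _ ≤ ∑ i, μ i * (⟪u, B i⟫ * ⟪B i, u⟫) := Finset.sum_le_sum hterm
    _ = ⟪SL A u, u⟫ := expS.symm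
    _ = ‖Lfun A u‖ ^ 2 := SSelf A u

end BG

theorem bilinear_hamiltonian_quasi_strongly_convex
    {n d1 d2 : ℕ} (hn : 0 < n)
    (A : Fin n → Matrix (Fin d1) (Fin d2) ℝ) (b : Fin n → Fin d1 → ℝ)
    (c : Fin n → Fin d2 → ℝ)
    (Abar : Matrix (Fin d1) (Fin d2) ℝ) (bbar : Fin d1 → ℝ) (cbar : Fin d2 → ℝ)
    (hA : Abar = (n : ℝ)⁻¹ • ∑ i, A i)
    (hb : bbar = (n : ℝ)⁻¹ • ∑ i, b i)
    (hc : cbar = (n : ℝ)⁻¹ • ∑ i, c i)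
    (hAne : Abar ≠ 0)
    (Xstar : Set (EuclideanSpace ℝ (Fin d1 ⊕ Fin d2)))
    (hXstar : Xstar = {x | xiBar Abar bbar cbar x = 0})
    (hne : Xstar.Nonempty) :
    (∀ x ∈ Xstar, Ham Abar bbar cbar x = 0) ∧
    (∀ x, 0 ≤ Ham Abar bbar cbar x) ∧
    (Xstar = {x | ∀ y, Ham Abar bbar cbar x ≤ Ham Abar bbar cbar y}) ∧
    (∀ x xbar : EuclideanSpace ℝ (Fin d1 ⊕ Fin d2), xbar ∈ Xstar →
      (∀ y ∈ Xstar, ‖x - xbar‖ ≤ ‖x - y‖) →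
      Ham Abar bbar cbar x + ⟪gradient (Ham Abar bbar cbar) x, xbar - x⟫
        + sigmaMinSq Abar / 2 * ‖xbar - x‖ ^ 2 ≤ 0) := by
  subst hXstar
  have hpos : ∀ x, 0 ≤ Ham Abar bbar cbar x := by
    intro x; rw [Ham]; positivity
  have hzero : ∀ x ∈ {x | xiBar Abar bbar cbar x = 0}, Ham Abar bbar cbar x = 0 := by
    intro x hx
    have hx' : xiBar Abar bbar cbar x = 0 := hx
    simp [Ham, hx']
  refine ⟨hzero, hpos, ?_, ?_⟩
  · ext x
    constructor
    · intro hx y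
      rw [hzero x hx]
      exact hpos y
    · intro hx
      obtain ⟨x0, hx0⟩ := hne
      have h1 : Ham Abar bbar cbar x ≤ 0 := by
        rw [← hzero x0 hx0]; exact hx x0
      have h2 : Ham Abar bbar cbar x = 0 := le_antisymm h1 (hpos x)
      have h3 : ‖xiBar Abar bbar cbar x‖ ^ 2 = 0 := by
        rw [Ham] at h2; linarith
      exact norm_eq_zero.mp (pow_eq_zero_iff two_ne_zero |>.mp h3)
  · intro x xbar hxbar hproj
    have hximg : xiBar Abar bbar cbar xbar = 0 := hxbar
    set u := x - xbar with hu
    have hxis : xiBar Abar bbar cbar x = BG.Lfun Abar u := by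
      rw [hu]
      have h := BG.xi_sub Abar bbar cbar x xbar
      rw [hximg, sub_zero] at h
      exact h
    have hgrad : gradient (Ham Abar bbar cbar) x
        = -(BG.Lfun Abar (xiBar Abar bbar cbar x)) :=
      (BG.hasGradient Abar bbar cbar x).gradient
    have hperp : ∀ w : EuclideanSpace ℝ (Fin d1 ⊕ Fin d2),
        BG.Lfun Abar w = 0 → ⟪w, u⟫ = 0 := by
      intro w hw
      by_cases hw0 : w = 0
      · rw [hw0]; exact inner_zero_left u
      · have hwpos : 0 < ‖w‖ := norm_pos_iff.mpr hw0
        have hs : (0 : ℝ) < ‖w‖ ^ 2 := by positivity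
        set t := ⟪u, w⟫ / ‖w‖ ^ 2 with ht
        have hy : xbar + t • w ∈ {x | xiBar Abar bbar cbar x = 0} := by
          show xiBar Abar bbar cbar (xbar + t • w) = 0
          have h := BG.xi_sub Abar bbar cbar (xbar + t • w) xbar
          rw [hximg, sub_zero, add_sub_cancel_left] at h
          rw [h, BG.Lfun_smul, hw, smul_zero]
        have hle := hproj _ hy
        have hxy : x - (xbar + t • w) = u - t • w := by rw [hu]; abel
        rw [hxy] at hle
        have h2 : ‖u‖ ^ 2 ≤ ‖u - t • w‖ ^ 2 := pow_le_pow_left₀ (norm_nonneg _) hle 2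
        rw [norm_sub_sq_real u (t • w), real_inner_smul_right u w t,
          norm_smul t w] at h2
        have h3 : (‖t‖ * ‖w‖) ^ 2 = t ^ 2 * ‖w‖ ^ 2 := by
          rw [mul_pow, Real.norm_eq_abs, sq_abs]
        rw [h3] at h2
        have hts : t * ‖w‖ ^ 2 = ⟪u, w⟫ := div_mul_cancel₀ _ hs.ne'
        have hkey : ⟪u, w⟫ ^ 2 ≤ 0 := by nlinarith
        have hc0 : ⟪u, w⟫ = 0 :=
          pow_eq_zero_iff two_ne_zero |>.mp (le_antisymm hkey (sq_nonneg _))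
        rw [real_inner_comm]; exact hc0
    have hHx : Ham Abar bbar cbar x = 1 / 2 * ‖BG.Lfun Abar u‖ ^ 2 := by
      rw [Ham, hxis]
    have hinner : ⟪gradient (Ham Abar bbar cbar) x, xbar - x⟫
        = -‖BG.Lfun Abar u‖ ^ 2 := by
      rw [hgrad, hxis]
      have h1 : xbar - x = -u := by rw [hu]; abel
      rw [h1, inner_neg_neg, BG.skew Abar (BG.Lfun Abar u) u,
        real_inner_self_eq_norm_sq]
    have hspec := BG.spec Abar u hperp
    have hnorm : ‖xbar - x‖ = ‖u‖ := by rw [hu, norm_sub_rev]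
    rw [hHx, hinner, hnorm]
    nlinarith



end
end

section
/- Let f = (1/N)∑_{m=1}^N f_m with each f_m : ℝ^d → ℝ differentiable. Suppose f is L-smooth, attains its minimum value f*, satisfies the Polyak–Łojasiewicz condition with constant μ > 0, and satisfies (1/N)∑_{m=1}^N ‖∇f_m(x) − ∇f_m(y) − (∇f(x) − ∇f(y))‖² ≤ ρ_nc ‖x − y‖² for all x, y ∈ ℝ^d and some ρ_nc > 0. Let p ∈ (0,1], let γ > 0 satisfy γ ≤ min{ 1/(4L), p^{2/3}/(36^{1/3}(Lρ_nc)^{1/3}), √p/√(6ρ_nc) }, and let K be a positive integer with K ≥ 4/(μγ). Consider the restarted L-SVRG method: given the outer iterate x^t, run K steps of L-SVRG with step size γ and probability p started at x⁰ = w⁰ = x^t (with fresh randomness), and let x^{t+1} be chosen uniformly at random from the K iterates x⁰, …, x^{K−1} of this run, independently of all other randomness. Then for every T ≥ 0, E[f(x^T) − f*] ≤ (1/2)^T (f(x⁰) − f*) and E‖∇f(x^T)‖² ≤ (1/2)^T ‖∇f(x⁰)‖². -/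
/-!
STATEMENT 13: Restarted L-SVRG on f = (1/N)∑f_m that is L-smooth, PL(μ), and satisfies
the second-moment residual bound with constant ρ_nc: with p ∈ (0,1],
γ ≤ min{1/(4L), p^{2/3}/(36^{1/3}(Lρ_nc)^{1/3}), √p/√(6ρ_nc)} and K ≥ 4/(μγ),
E[f(x^T) − f*] ≤ (1/2)^T (f(x⁰) − f*) and E‖∇f(x^T)‖² ≤ (1/2)^T ‖∇f(x⁰)‖².
-/

open scoped RealInnerProductSpace BigOperators

noncomputable section

variable {N d : ℕ}

/-- The average f = (1/N) ∑ₘ fₘ. -/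
def favg (f : Fin N → EuclideanSpace ℝ (Fin d) → ℝ) (x : EuclideanSpace ℝ (Fin d)) : ℝ :=
  (N : ℝ)⁻¹ * ∑ m, f m x

/-- One step of L-SVRG on the state (x, w): with index m and Bernoulli outcome θ,
x ↦ x − γ(∇f_m(x) − ∇f_m(w) + ∇f(w)), and w ↦ x if θ, w ↦ w otherwise. -/
def lsvrgStep (f : Fin N → EuclideanSpace ℝ (Fin d) → ℝ) (γ : ℝ) (m : Fin N) (θ : Bool)
    (s : EuclideanSpace ℝ (Fin d) × EuclideanSpace ℝ (Fin d)) :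
    EuclideanSpace ℝ (Fin d) × EuclideanSpace ℝ (Fin d) :=
  (s.1 - γ • (gradient (f m) s.1 - gradient (f m) s.2 + gradient (favg f) s.2),
   if θ then s.1 else s.2)

/-- `lsvrgExp f γ p k φ s` is the expectation E[φ(x^k, w^k) | (x⁰, w⁰) = s] for the
L-SVRG Markov chain with m_k i.i.d. uniform on {1,…,N} and θ_k i.i.d. Bernoulli(p). -/
def lsvrgExp (f : Fin N → EuclideanSpace ℝ (Fin d) → ℝ) (γ p : ℝ) :
    ℕ → (EuclideanSpace ℝ (Fin d) × EuclideanSpace ℝ (Fin d) → ℝ) →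
      EuclideanSpace ℝ (Fin d) × EuclideanSpace ℝ (Fin d) → ℝ
  | 0, φ => φ
  | k + 1, φ => fun s => (N : ℝ)⁻¹ * ∑ m,
      (p * lsvrgExp f γ p k φ (lsvrgStep f γ m true s)
        + (1 - p) * lsvrgExp f γ p k φ (lsvrgStep f γ m false s))

/-- `restartExp f γ p K T φ y` is the expectation E[φ(x^T) | outer start y] for the
restarted method: each outer step runs K inner L-SVRG steps started at (y, y) with
fresh randomness and outputs one of the K inner iterates x⁰, …, x^{K−1} chosen
uniformly at random, independently of everything else. -/
def restartExp (f : Fin N → EuclideanSpace ℝ (Fin d) → ℝ) (γ p : ℝ) (K : ℕ) :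
    ℕ → (EuclideanSpace ℝ (Fin d) → ℝ) → EuclideanSpace ℝ (Fin d) → ℝ
  | 0, φ => φ
  | T + 1, φ => fun y => (K : ℝ)⁻¹ * ∑ u ∈ Finset.range K,
      lsvrgExp f γ p u (fun s => restartExp f γ p K T φ s.1) (y, y)


theorem descent_lemma {E : Type*} [NormedAddCommGroup E] [InnerProductSpace ℝ E] [CompleteSpace E]
    (f : E → ℝ) (hf : Differentiable ℝ f) (L : ℝ) (hL : 0 ≤ L)
    (hsm : ∀ x y, ‖gradient f x - gradient f y‖ ≤ L * ‖x - y‖)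
    (x v : E) : f (x + v) ≤ f x + ⟪gradient f x, v⟫ + L / 2 * ‖v‖ ^ 2 := by
  have hgrad_cont : Continuous (gradient f) := by
    have : LipschitzWith ⟨L, hL⟩ (gradient f) := by
      apply LipschitzWith.of_dist_le_mul
      intro a b
      rw [dist_eq_norm, dist_eq_norm]; exact hsm a b
    exact this.continuous
  set g' : ℝ → ℝ := fun t => ⟪gradient f (x + t • v), v⟫ with hg'
  have hderiv : ∀ t : ℝ, HasDerivAt (fun t : ℝ => f (x + t • v)) (g' t) t := by
    intro t
    have hline : HasDerivAt (fun t : ℝ => x + t • v) v t := by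
      simpa using ((hasDerivAt_id t).smul_const v).const_add x
    have hF : HasFDerivAt f (InnerProductSpace.toDual ℝ E (gradient f (x + t • v))) (x + t • v) :=
      ((hf (x + t • v)).hasGradientAt).hasFDerivAt
    have h := hF.comp_hasDerivAt t hline
    have : (fun t : ℝ => f (x + t • v)) = f ∘ fun t : ℝ => x + t • v := rfl
    rw [this]
    exact h
  have hcont : Continuous g' := by
    apply Continuous.inner
    · exact hgrad_cont.comp (by continuity)
    · exact continuous_const
  have hint : ∀ a b : ℝ, IntervalIntegrable g' MeasureTheory.volume a b :=
    fun a b => hcont.intervalIntegrable a b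
  have key : f (x + v) - f x = ∫ t in (0:ℝ)..1, g' t := by
    have := intervalIntegral.integral_eq_sub_of_hasDerivAt
      (f := fun t : ℝ => f (x + t • v)) (f' := g')
      (fun t _ => hderiv t) (hint 0 1)
    simp at this
    rw [this]
  have hcont2 : Continuous fun t : ℝ => ⟪gradient f x, v⟫ + L * t * ‖v‖ ^ 2 := by continuity
  have hmono : (∫ t in (0:ℝ)..1, g' t) ≤ ∫ t in (0:ℝ)..1, (⟪gradient f x, v⟫ + L * t * ‖v‖ ^ 2) := by
    apply intervalIntegral.integral_mono_on (by norm_num) (hint 0 1)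
      (hcont2.intervalIntegrable 0 1)
    intro t ht
    rw [Set.mem_Icc] at ht
    have h1 : g' t - ⟪gradient f x, v⟫ = ⟪gradient f (x + t • v) - gradient f x, v⟫ := by
      simp [g', inner_sub_left]
    have h2 : ⟪gradient f (x + t • v) - gradient f x, v⟫ ≤ L * t * ‖v‖ ^ 2 := by
      calc ⟪gradient f (x + t • v) - gradient f x, v⟫
          ≤ ‖gradient f (x + t • v) - gradient f x‖ * ‖v‖ := real_inner_le_norm _ _
        _ ≤ (L * ‖(x + t • v) - x‖) * ‖v‖ := by
            apply mul_le_mul_of_nonneg_right (hsm _ _) (norm_nonneg _)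
        _ = L * t * ‖v‖ ^ 2 := by
            rw [show (x + t • v) - x = t • v by abel, norm_smul]
            rw [Real.norm_eq_abs, abs_of_nonneg ht.1]
            ring
    linarith [h1 ▸ h2]
  have hval : (∫ t in (0:ℝ)..1, (⟪gradient f x, v⟫ + L * t * ‖v‖ ^ 2))
      = ⟪gradient f x, v⟫ + L / 2 * ‖v‖ ^ 2 := by
    have hc1 : Continuous fun _ : ℝ => ⟪gradient f x, v⟫ := continuous_const
    have hc2 : Continuous fun t : ℝ => L * t * ‖v‖ ^ 2 := by continuity
    rw [intervalIntegral.integral_add (hc1.intervalIntegrable 0 1) (hc2.intervalIntegrable 0 1)]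
    have : (fun t : ℝ => L * t * ‖v‖ ^ 2) = fun t : ℝ => (L * ‖v‖ ^ 2) * t := by ext t; ring
    rw [this, intervalIntegral.integral_const_mul]
    rw [integral_id]
    simp
    ring
  linarith [key, hmono, hval]

def lsvrgE1 (f : Fin N → EuclideanSpace ℝ (Fin d) → ℝ) (γ p : ℝ)
    (φ : EuclideanSpace ℝ (Fin d) × EuclideanSpace ℝ (Fin d) → ℝ)
    (s : EuclideanSpace ℝ (Fin d) × EuclideanSpace ℝ (Fin d)) : ℝ :=
  (N : ℝ)⁻¹ * ∑ m, (p * φ (lsvrgStep f γ m true s) + (1 - p) * φ (lsvrgStep f γ m false s))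

variable {f : Fin N → EuclideanSpace ℝ (Fin d) → ℝ} {γ p : ℝ}

lemma lsvrgExp_succ (k : ℕ) (φ : _ → ℝ) (s) :
    lsvrgExp f γ p (k+1) φ s = lsvrgE1 f γ p (lsvrgExp f γ p k φ) s := rfl

lemma lsvrgExp_mono (hp0 : 0 ≤ p) (hp1 : p ≤ 1) {φ ψ : _ → ℝ} (h : ∀ s, φ s ≤ ψ s) :
    ∀ k s, lsvrgExp f γ p k φ s ≤ lsvrgExp f γ p k ψ s := by
  intro k
  induction k with
  | zero => exact h
  | succ k ih =>
    intro s
    rw [lsvrgExp_succ, lsvrgExp_succ]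
    unfold lsvrgE1
    apply mul_le_mul_of_nonneg_left _ (by positivity)
    apply Finset.sum_le_sum
    intro m _
    exact add_le_add (mul_le_mul_of_nonneg_left (ih _) hp0)
      (mul_le_mul_of_nonneg_left (ih _) (by linarith))

lemma lsvrgExp_const_mul (a : ℝ) (φ : _ → ℝ) :
    ∀ k s, lsvrgExp f γ p k (fun s => a * φ s) s = a * lsvrgExp f γ p k φ s := by
  intro k
  induction k with
  | zero => intro s; rfl
  | succ k ih =>
    intro s
    rw [lsvrgExp_succ, lsvrgExp_succ]
    unfold lsvrgE1
    have : ∀ m : Fin N, p * lsvrgExp f γ p k (fun s => a * φ s) (lsvrgStep f γ m true s)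
        + (1 - p) * lsvrgExp f γ p k (fun s => a * φ s) (lsvrgStep f γ m false s)
        = a * (p * lsvrgExp f γ p k φ (lsvrgStep f γ m true s)
          + (1 - p) * lsvrgExp f γ p k φ (lsvrgStep f γ m false s)) := by
      intro m; rw [ih, ih]; ring
    rw [Finset.sum_congr rfl (fun m _ => this m), ← Finset.mul_sum]
    ring

lemma lsvrgExp_sub (φ ψ : _ → ℝ) :
    ∀ k s, lsvrgExp f γ p k (fun s => φ s - ψ s) s
      = lsvrgExp f γ p k φ s - lsvrgExp f γ p k ψ s := by
  intro k
  induction k with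
  | zero => intro s; rfl
  | succ k ih =>
    intro s
    rw [lsvrgExp_succ, lsvrgExp_succ, lsvrgExp_succ]
    unfold lsvrgE1
    rw [← mul_sub, ← Finset.sum_sub_distrib]
    congr 1
    apply Finset.sum_congr rfl
    intro m _
    rw [ih, ih]
    ring

lemma lsvrgExp_nonneg (hp0 : 0 ≤ p) (hp1 : p ≤ 1) {φ : _ → ℝ} (h : ∀ s, 0 ≤ φ s) :
    ∀ k s, 0 ≤ lsvrgExp f γ p k φ s := by
  intro k
  induction k with
  | zero => exact h
  | succ k ih =>
    intro s
    rw [lsvrgExp_succ]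
    unfold lsvrgE1
    apply mul_nonneg (by positivity)
    apply Finset.sum_nonneg
    intro m _
    have := ih (lsvrgStep f γ m true s)
    have := ih (lsvrgStep f γ m false s)
    nlinarith

lemma lsvrgExp_succ' (φ : _ → ℝ) :
    ∀ k s, lsvrgExp f γ p (k+1) φ s = lsvrgExp f γ p k (lsvrgE1 f γ p φ) s := by
  intro k
  induction k with
  | zero => intro s; rfl
  | succ k ih =>
    intro s
    have harg : lsvrgExp f γ p (k+1) φ = lsvrgExp f γ p k (lsvrgE1 f γ p φ) :=
      funext ih
    rw [lsvrgExp_succ (k+1) φ s, lsvrgE1, harg]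
    exact (lsvrgExp_succ k (lsvrgE1 f γ p φ) s).symm

lemma lsvrg_telescope (hp0 : 0 ≤ p) (hp1 : p ≤ 1) (Φ ψ : _ → ℝ)
    (hΦ0 : ∀ s, 0 ≤ Φ s)
    (hstep : ∀ s, lsvrgE1 f γ p Φ s ≤ Φ s - ψ s) :
    ∀ K s, ∑ u ∈ Finset.range K, lsvrgExp f γ p u ψ s ≤ Φ s := by
  have h1 : ∀ k s, lsvrgExp f γ p (k+1) Φ s
      ≤ lsvrgExp f γ p k Φ s - lsvrgExp f γ p k ψ s := by
    intro k s
    rw [lsvrgExp_succ']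
    calc lsvrgExp f γ p k (lsvrgE1 f γ p Φ) s
        ≤ lsvrgExp f γ p k (fun s => Φ s - ψ s) s := lsvrgExp_mono hp0 hp1 hstep k s
      _ = _ := lsvrgExp_sub Φ ψ k s
  have h2 : ∀ K s, ∑ u ∈ Finset.range K, lsvrgExp f γ p u ψ s
      ≤ Φ s - lsvrgExp f γ p K Φ s := by
    intro K
    induction K with
    | zero => intro s; simp [show lsvrgExp f γ p 0 Φ s = Φ s from rfl]
    | succ K ih =>
      intro s
      rw [Finset.sum_range_succ]
      have := ih s
      have := h1 K s
      linarith
  intro K s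
  have ha := h2 K s
  have hb := lsvrgExp_nonneg (f:=f) (γ:=γ) hp0 hp1 hΦ0 K s
  linarith

set_option maxHeartbeats 1000000 in
lemma avg_split (hN : 0 < N) (α a b e : ℝ) (β χ δ : Fin N → ℝ) :
    (N:ℝ)⁻¹ * ∑ m, (α + a * β m + b * χ m + e * δ m)
      = α + a * ((N:ℝ)⁻¹ * ∑ m, β m) + b * ((N:ℝ)⁻¹ * ∑ m, χ m)
        + e * ((N:ℝ)⁻¹ * ∑ m, δ m) := by
  have hNne : (N:ℝ) ≠ 0 := Nat.cast_ne_zero.mpr hN.ne'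
  rw [Finset.sum_add_distrib, Finset.sum_add_distrib, Finset.sum_add_distrib,
    Finset.sum_const, Finset.card_univ, Fintype.card_fin,
    ← Finset.mul_sum, ← Finset.mul_sum, ← Finset.mul_sum, nsmul_eq_mul]
  field_simp

set_option maxHeartbeats 1000000 in
lemma onestep (hN : 0 < N) (f : Fin N → EuclideanSpace ℝ (Fin d) → ℝ)
    (hdiff : ∀ m, Differentiable ℝ (f m)) (L : ℝ) (hL : 0 < L)
    (hsmooth : ∀ x y, ‖gradient (favg f) x - gradient (favg f) y‖ ≤ L * ‖x - y‖)
    (fstar : ℝ) (ρnc : ℝ) (hρnc : 0 < ρnc)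
    (hres : ∀ x y, (N : ℝ)⁻¹ * ∑ m,
        ‖gradient (f m) x - gradient (f m) y
          - (gradient (favg f) x - gradient (favg f) y)‖ ^ 2
      ≤ ρnc * ‖x - y‖ ^ 2)
    (p γ : ℝ) (hp0 : 0 < p) (hp1 : p ≤ 1) (hγ0 : 0 < γ)
    (h4L : 4 * L * γ ≤ 1) (h36 : 36 * L * ρnc * γ ^ 3 ≤ p ^ 2) (h6 : 6 * ρnc * γ ^ 2 ≤ p)
    (c : ℝ) (hc0 : 0 ≤ c) (hc2 : c * (2 * p) = 3 * L * ρnc * γ ^ 2)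
    (x w : EuclideanSpace ℝ (Fin d)) :
    lsvrgE1 f γ p (fun s => (favg f s.1 - fstar) + c * ‖s.1 - s.2‖ ^ 2) (x, w)
      ≤ (favg f x - fstar) + c * ‖x - w‖ ^ 2 - (γ/2) * ‖gradient (favg f) x‖ ^ 2 := by
  have hNne : (N:ℝ) ≠ 0 := Nat.cast_ne_zero.mpr hN.ne'
  have hL0 : (0:ℝ) ≤ L := hL.le
  set Gd := gradient (favg f) with hGd
  have hFdiff : Differentiable ℝ (favg f) :=
    Differentiable.const_mul (Differentiable.fun_sum fun m _ => hdiff m) _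
  -- gradient of average
  have hgradsum : ∀ z, ∑ m, gradient (f m) z = (N:ℝ) • Gd z := by
    intro z
    have h1 : HasFDerivAt (fun y => ∑ m, f m y)
        (∑ m, (InnerProductSpace.toDual ℝ _) (gradient (f m) z)) z :=
      HasFDerivAt.fun_sum (fun m _ => ((hdiff m z).hasGradientAt).hasFDerivAt)
    have h2 : HasFDerivAt (favg f)
        ((N:ℝ)⁻¹ • ∑ m, (InnerProductSpace.toDual ℝ _) (gradient (f m) z)) z := by
      exact h1.const_smul ((N:ℝ)⁻¹)
    have h3 : HasGradientAt (favg f) ((N:ℝ)⁻¹ • ∑ m, gradient (f m) z) z := by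
      have := h2.hasGradientAt
      convert this using 1
      simp [map_sum]
      rfl
    rw [hGd, h3.gradient, smul_smul, mul_inv_cancel₀ hNne, one_smul]
  set g : Fin N → EuclideanSpace ℝ (Fin d) :=
    fun m => gradient (f m) x - gradient (f m) w + Gd w with hg
  have hsumg : ∑ m, g m = (N:ℝ) • Gd x := by
    rw [hg]
    rw [Finset.sum_add_distrib, Finset.sum_sub_distrib, hgradsum x, hgradsum w,
      Finset.sum_const, Finset.card_univ, Fintype.card_fin, ← Nat.cast_smul_eq_nsmul ℝ]
    abel
  have hinner1 : (N:ℝ)⁻¹ * ∑ m, ⟪Gd x, g m⟫ = ‖Gd x‖ ^ 2 := by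
    rw [← inner_sum, hsumg, real_inner_smul_right, real_inner_self_eq_norm_sq]
    field_simp
  have hinner2 : (N:ℝ)⁻¹ * ∑ m, ⟪g m, x - w⟫ = ⟪Gd x, x - w⟫ := by
    rw [← sum_inner, hsumg, real_inner_smul_left]
    field_simp
  -- second moment bound
  have hS : (N:ℝ)⁻¹ * ∑ m, ‖g m‖ ^ 2 ≤ ‖Gd x‖ ^ 2 + ρnc * ‖x - w‖ ^ 2 := by
    have hdecomp : ∀ m : Fin N, ‖g m‖ ^ 2
        = ‖Gd x‖ ^ 2 + 2 * ⟪Gd x, g m - Gd x⟫ + ‖g m - Gd x‖ ^ 2 := by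
      intro m
      have h := norm_add_sq_real (Gd x) (g m - Gd x)
      rw [show Gd x + (g m - Gd x) = g m by abel] at h
      linarith
    have hcross : ∑ m, ⟪Gd x, g m - Gd x⟫ = (0:ℝ) := by
      rw [← inner_sum, Finset.sum_sub_distrib, hsumg, Finset.sum_const,
        Finset.card_univ, Fintype.card_fin, ← Nat.cast_smul_eq_nsmul ℝ]
      simp
    have hgsub : ∀ m : Fin N, g m - Gd x
        = gradient (f m) x - gradient (f m) w - (Gd x - Gd w) := by
      intro m; rw [hg]; abel_nf; simp only [add_assoc]
    have hsum2 : ∑ m, ‖g m‖ ^ 2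
        = (N:ℝ) * ‖Gd x‖ ^ 2 + ∑ m, ‖g m - Gd x‖ ^ 2 := by
      rw [Finset.sum_congr rfl (fun m _ => hdecomp m), Finset.sum_add_distrib,
        Finset.sum_add_distrib, Finset.sum_const, Finset.card_univ, Fintype.card_fin,
        ← Finset.mul_sum, hcross, nsmul_eq_mul]
      ring
    have hres' := hres x w
    have hmatch : ∑ m, ‖g m - Gd x‖ ^ 2 = ∑ m,
        ‖gradient (f m) x - gradient (f m) w - (Gd x - Gd w)‖ ^ 2 :=
      Finset.sum_congr rfl (fun m _ => by rw [hgsub m])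
    rw [hsum2, hmatch]
    rw [mul_add, ← mul_assoc, inv_mul_cancel₀ hNne, one_mul]
    rw [hGd] at hres' ⊢
    linarith
  -- descent lemma applied
  have hdesc : ∀ m : Fin N, favg f (x - γ • g m) - fstar
      ≤ (favg f x - fstar) + (-γ) * ⟪Gd x, g m⟫ + (L/2 * γ^2) * ‖g m‖ ^ 2 := by
    intro m
    have h := descent_lemma (favg f) hFdiff L hL0 hsmooth x (-(γ • g m))
    rw [show x + -(γ • g m) = x - γ • g m by abel] at h
    have hi : ⟪Gd x, -(γ • g m)⟫ = -γ * ⟪Gd x, g m⟫ := by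
      rw [inner_neg_right, real_inner_smul_right]; ring
    have hn : ‖-(γ • g m)‖ ^ 2 = γ ^ 2 * ‖g m‖ ^ 2 := by
      rw [norm_neg, norm_smul, Real.norm_eq_abs, mul_pow, sq_abs]
    rw [hGd] at hi ⊢
    rw [hi, hn] at h
    linarith
  have hdist : ∀ m : Fin N, ‖(x - γ • g m) - w‖ ^ 2
      = ‖x - w‖ ^ 2 - 2 * γ * ⟪g m, x - w⟫ + γ ^ 2 * ‖g m‖ ^ 2 := by
    intro m
    have h := norm_sub_sq_real (x - w) (γ • g m)
    rw [show x - γ • g m - w = (x - w) - γ • g m by abel]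
    rw [h, real_inner_smul_right, norm_smul, Real.norm_eq_abs, mul_pow, sq_abs,
      real_inner_comm]
    ring
  -- expansion of the one-step expectation
  have hstept : ∀ m : Fin N, lsvrgStep f γ m true (x, w) = (x - γ • g m, x) := by
    intro m; simp [lsvrgStep, hg]; rfl
  have hstepf : ∀ m : Fin N, lsvrgStep f γ m false (x, w) = (x - γ • g m, w) := by
    intro m; rw [lsvrgStep, hg]; simp; rfl
  have hnorm1 : ∀ m : Fin N, ‖(x - γ • g m) - x‖ ^ 2 = γ ^ 2 * ‖g m‖ ^ 2 := by
    intro m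
    rw [show (x - γ • g m) - x = -(γ • g m) by abel, norm_neg, norm_smul,
      Real.norm_eq_abs, mul_pow, sq_abs]
  have hexp : lsvrgE1 f γ p (fun s => (favg f s.1 - fstar) + c * ‖s.1 - s.2‖ ^ 2) (x, w)
      = (c*(1-p)*‖x-w‖^2) + 1 * ((N:ℝ)⁻¹ * ∑ m, (favg f (x - γ • g m) - fstar))
        + (c*γ^2) * ((N:ℝ)⁻¹ * ∑ m, ‖g m‖ ^ 2)
        + (-(2*c*(1-p)*γ)) * ((N:ℝ)⁻¹ * ∑ m, ⟪g m, x - w⟫) := by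
    have hterm : ∀ m ∈ (Finset.univ : Finset (Fin N)),
        p * ((fun s : EuclideanSpace ℝ (Fin d) × EuclideanSpace ℝ (Fin d) =>
            (favg f s.1 - fstar) + c * ‖s.1 - s.2‖ ^ 2) (lsvrgStep f γ m true (x, w)))
          + (1 - p) * ((fun s : EuclideanSpace ℝ (Fin d) × EuclideanSpace ℝ (Fin d) =>
            (favg f s.1 - fstar) + c * ‖s.1 - s.2‖ ^ 2) (lsvrgStep f γ m false (x, w)))
        = (c*(1-p)*‖x-w‖^2) + 1 * (favg f (x - γ • g m) - fstar)
          + (c*γ^2) * ‖g m‖ ^ 2 + (-(2*c*(1-p)*γ)) * ⟪g m, x - w⟫ := by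
      intro m _
      simp only [hstept m, hstepf m]
      rw [hnorm1 m, hdist m]
      ring
    rw [lsvrgE1, Finset.sum_congr rfl hterm, avg_split hN]
  rw [hexp, hinner2]
  -- abbreviations
  set D := ‖x - w‖ ^ 2 with hD
  set Gn := ‖Gd x‖ ^ 2 with hGn
  set S := (N:ℝ)⁻¹ * ∑ m, ‖g m‖ ^ 2 with hSdef
  set Cb := ⟪Gd x, x - w⟫ with hCb
  have hD0 : 0 ≤ D := by rw [hD]; positivity
  have hGn0 : 0 ≤ Gn := by rw [hGn]; positivity
  have hS0 : 0 ≤ S := by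
    rw [hSdef]
    exact mul_nonneg (by positivity) (Finset.sum_nonneg fun m _ => by positivity)
  have h1p : (0:ℝ) ≤ 1 - p := by linarith
  -- average of descent
  have hAb : (N:ℝ)⁻¹ * ∑ m, (favg f (x - γ • g m) - fstar)
      ≤ (favg f x - fstar) - γ * Gn + (L/2 * γ^2) * S := by
    have hsum := Finset.sum_le_sum (fun m (_ : m ∈ Finset.univ) => hdesc m)
    have h2 : (N:ℝ)⁻¹ * ∑ m, (favg f (x - γ • g m) - fstar)
        ≤ (N:ℝ)⁻¹ * ∑ m, ((favg f x - fstar) + (-γ) * ⟪Gd x, g m⟫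
            + (L/2 * γ^2) * ‖g m‖ ^ 2) := by
      apply mul_le_mul_of_nonneg_left _ (by positivity)
      calc ∑ m, (favg f (x - γ • g m) - fstar)
          ≤ ∑ m, (favg f x - fstar + -γ * ⟪Gd x, g m⟫ + L / 2 * γ ^ 2 * ‖g m‖ ^ 2) := hsum
        _ = ∑ m, ((favg f x - fstar) + (-γ) * ⟪Gd x, g m⟫ + (L/2 * γ^2) * ‖g m‖ ^ 2) := by
            apply Finset.sum_congr rfl; intro m _; ring
    have hterm2 : ∀ m ∈ (Finset.univ : Finset (Fin N)),
        ((favg f x - fstar) + (-γ) * ⟪Gd x, g m⟫ + (L/2 * γ^2) * ‖g m‖ ^ 2)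
        = ((favg f x - fstar) + (-γ) * ⟪Gd x, g m⟫ + (L/2 * γ^2) * ‖g m‖ ^ 2
            + 0 * (0:ℝ)) := by
      intro m _; ring
    rw [Finset.sum_congr rfl hterm2, avg_split hN, hinner1, ← hSdef] at h2
    linarith [h2]
  -- Young inequality for the cross term
  have hyoung : -(2*γ) * Cb ≤ (p/2) * D + (2*γ^2/p) * Gn := by
    have habs := abs_real_inner_le_norm (Gd x) (x - w)
    have hkey : 4*p*γ*(‖Gd x‖*‖x - w‖) ≤ p^2*‖x - w‖^2 + 4*γ^2*‖Gd x‖^2 := by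
      nlinarith [sq_nonneg (p*‖x - w‖ - 2*γ*‖Gd x‖)]
    have hrw : (p/2) * D + (2*γ^2/p) * Gn
        = (p^2*‖x - w‖^2 + 4*γ^2*‖Gd x‖^2) / (2*p) := by
      rw [hD, hGn]; field_simp; ring
    rw [hrw, le_div_iff₀ (by linarith : (0:ℝ) < 2*p)]
    have h1 : -(2*γ) * Cb ≤ 2*γ*(‖Gd x‖*‖x - w‖) := by
      rw [hCb]
      have h0 := neg_abs_le (⟪Gd x, x - w⟫ : ℝ)
      nlinarith [habs]
    nlinarith [h1, hkey]
  -- coefficient bounds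
  have hcG : L/2*γ^2 + c*γ^2 + c*(1-p)*(2*γ^2/p) ≤ γ/2 := by
    have hmul : (L/2*γ^2 + c*γ^2 + c*(1-p)*(2*γ^2/p)) * (2*p^2)
        = L*γ^2*p^2 + 3*L*ρnc*γ^4*p + 6*L*ρnc*γ^4*(1-p) := by
      have hq : (2*γ^2/p)*p = 2*γ^2 := by field_simp
      have e : (L/2*γ^2 + c*γ^2 + c*(1-p)*(2*γ^2/p)) * (2*p^2)
          = L*γ^2*p^2 + 2*c*γ^2*p^2 + c*(1-p)*((2*γ^2/p)*p)*(2*p) := by ring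
      rw [e, hq]
      linear_combination (γ^2*p + 2*γ^2*(1-p)) * hc2
    have hgp2 : (0:ℝ) ≤ γ*p^2 := le_of_lt (mul_pos hγ0 (pow_pos hp0 2))
    have ha : 4*L*γ^2*p^2 ≤ γ*p^2 := by nlinarith [mul_le_mul_of_nonneg_right h4L hgp2]
    have hb : 36*L*ρnc*γ^4 ≤ p^2*γ := by
      nlinarith [mul_le_mul_of_nonneg_right h36 hγ0.le]
    have hcnn : 0 ≤ 3*L*ρnc*γ^4*p := by positivity
    have hfin : (L/2*γ^2 + c*γ^2 + c*(1-p)*(2*γ^2/p)) * (2*p^2) ≤ (γ/2) * (2*p^2) := by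
      rw [hmul]; linarith [ha, hb, hcnn]
    exact le_of_mul_le_mul_right hfin (by linarith [pow_pos hp0 2])
  have hcD : (L/2 + c)*γ^2*ρnc + c*(1-p)*(1+p/2) ≤ c := by
    have hmul : ((L/2 + c)*γ^2*ρnc + c*(1-p)*(1+p/2)) * (2*p)
        = L*γ^2*ρnc*p + 3*L*ρnc*γ^2*(γ^2*ρnc) + 3*L*ρnc*γ^2*((1-p)*(1+p/2)) := by
      linear_combination (γ^2*ρnc + (1-p)*(1+p/2)) * hc2
    have hkey : 6*ρnc*γ^2 * (L*ρnc*γ^2 / 2) ≤ p * (L*ρnc*γ^2 / 2) :=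
      mul_le_mul_of_nonneg_right h6
        (div_nonneg (mul_nonneg (mul_nonneg hL0 hρnc.le) (sq_nonneg γ)) (by norm_num))
    have hfin : ((L/2 + c)*γ^2*ρnc + c*(1-p)*(1+p/2)) * (2*p) ≤ c * (2*p) := by
      rw [hmul, hc2]
      linarith [hkey, mul_nonneg (mul_nonneg (mul_nonneg hL0 hρnc.le) (sq_nonneg γ)) (sq_nonneg p)]
    exact le_of_mul_le_mul_right hfin (by linarith)
  -- put it all together
  have hy3 : (-(2*c*(1-p)*γ)) * Cb ≤ c*(1-p)*((p/2)*D + (2*γ^2/p)*Gn) := by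
    have heq : (-(2*c*(1-p)*γ)) * Cb = c*(1-p)*(-(2*γ) * Cb) := by ring
    rw [heq]
    exact mul_le_mul_of_nonneg_left hyoung (mul_nonneg hc0 h1p)
  have e1 : c*(1-p)*D + 1 * ((N:ℝ)⁻¹ * ∑ m, (favg f (x - γ • g m) - fstar))
      + (c*γ^2) * S + (-(2*c*(1-p)*γ)) * Cb
      ≤ (favg f x - fstar) - γ*Gn + (L/2*γ^2 + c*γ^2) * S + c*(1-p)*D
        + c*(1-p)*((p/2)*D + (2*γ^2/p)*Gn) := by
    linarith [hAb, hy3]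
  have e2 : (L/2*γ^2 + c*γ^2) * S ≤ (L/2*γ^2 + c*γ^2) * (Gn + ρnc*D) :=
    mul_le_mul_of_nonneg_left hS
      (add_nonneg (mul_nonneg (by linarith) (sq_nonneg γ)) (mul_nonneg hc0 (sq_nonneg γ)))
  have e3 : (favg f x - fstar) - γ*Gn + (L/2*γ^2 + c*γ^2) * (Gn + ρnc*D) + c*(1-p)*D
      + c*(1-p)*((p/2)*D + (2*γ^2/p)*Gn)
      ≤ (favg f x - fstar) + c*D - (γ/2)*Gn := by
    have t1 := mul_le_mul_of_nonneg_right hcG hGn0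
    have t2 := mul_le_mul_of_nonneg_right hcD hD0
    linarith [t1, t2]
  linarith [e1, e2, e3]

set_option maxHeartbeats 2000000 in
theorem restarted_lsvrg_linear_convergence_PL
    (hN : 0 < N) (f : Fin N → EuclideanSpace ℝ (Fin d) → ℝ)
    (hdiff : ∀ m, Differentiable ℝ (f m))
    (L : ℝ) (hL : 0 < L)
    (hsmooth : ∀ x y, ‖gradient (favg f) x - gradient (favg f) y‖ ≤ L * ‖x - y‖)
    (fstar : ℝ) (hmin : ∃ xm, favg f xm = fstar ∧ ∀ y, fstar ≤ favg f y)
    (μ : ℝ) (hμ : 0 < μ)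
    (hPL : ∀ x, μ * (favg f x - fstar) ≤ (1 / 2 : ℝ) * ‖gradient (favg f) x‖ ^ 2)
    (ρnc : ℝ) (hρnc : 0 < ρnc)
    (hres : ∀ x y, (N : ℝ)⁻¹ * ∑ m,
        ‖gradient (f m) x - gradient (f m) y
          - (gradient (favg f) x - gradient (favg f) y)‖ ^ 2
      ≤ ρnc * ‖x - y‖ ^ 2)
    (p : ℝ) (hp0 : 0 < p) (hp1 : p ≤ 1)
    (γ : ℝ) (hγ0 : 0 < γ)
    (hγ : γ ≤ min (1 / (4 * L))
      (min (p ^ ((2 : ℝ) / 3) / ((36 : ℝ) ^ ((1 : ℝ) / 3) * (L * ρnc) ^ ((1 : ℝ) / 3)))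
        (Real.sqrt p / Real.sqrt (6 * ρnc))))
    (K : ℕ) (hK0 : 0 < K) (hK : (4 : ℝ) / (μ * γ) ≤ K)
    (x0 : EuclideanSpace ℝ (Fin d)) :
    ∀ T : ℕ,
      restartExp f γ p K T (fun y => favg f y - fstar) x0
          ≤ (1 / 2 : ℝ) ^ T * (favg f x0 - fstar) ∧
      restartExp f γ p K T (fun y => ‖gradient (favg f) y‖ ^ 2) x0
          ≤ (1 / 2 : ℝ) ^ T * ‖gradient (favg f) x0‖ ^ 2 := by

  obtain ⟨xm, hxm, hfs'⟩ := hmin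
  have hfs : ∀ y, fstar ≤ favg f y := hfs'
  have hL0 : (0:ℝ) ≤ L := hL.le
  -- scalar consequences of the stepsize condition
  have h1γ : γ ≤ 1 / (4 * L) := hγ.trans (min_le_left _ _)
  have h2γ : γ ≤ p ^ ((2 : ℝ) / 3) / ((36 : ℝ) ^ ((1 : ℝ) / 3) * (L * ρnc) ^ ((1 : ℝ) / 3)) :=
    hγ.trans ((min_le_right _ _).trans (min_le_left _ _))
  have h3γ : γ ≤ Real.sqrt p / Real.sqrt (6 * ρnc) :=
    hγ.trans ((min_le_right _ _).trans (min_le_right _ _))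
  have h4L : 4 * L * γ ≤ 1 := by
    rw [le_div_iff₀ (by positivity)] at h1γ; linarith
  have h36 : 36 * L * ρnc * γ ^ 3 ≤ p ^ 2 := by
    have hcube : γ ^ 3 ≤ (p ^ ((2 : ℝ) / 3)
        / ((36 : ℝ) ^ ((1 : ℝ) / 3) * (L * ρnc) ^ ((1 : ℝ) / 3))) ^ 3 :=
      pow_le_pow_left₀ hγ0.le h2γ 3
    have hA : (p ^ ((2 : ℝ) / 3) / ((36 : ℝ) ^ ((1 : ℝ) / 3) * (L * ρnc) ^ ((1 : ℝ) / 3))) ^ 3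
        = p ^ 2 / (36 * (L * ρnc)) := by
      rw [div_pow, mul_pow]
      rw [← Real.rpow_natCast (p ^ ((2:ℝ)/3)) 3, ← Real.rpow_mul hp0.le]
      rw [← Real.rpow_natCast ((36:ℝ) ^ ((1:ℝ)/3)) 3, ← Real.rpow_mul (by norm_num)]
      rw [← Real.rpow_natCast ((L*ρnc) ^ ((1:ℝ)/3)) 3, ← Real.rpow_mul (by positivity)]
      norm_num
    rw [hA] at hcube
    rw [le_div_iff₀ (by positivity)] at hcube
    nlinarith
  have h6 : 6 * ρnc * γ ^ 2 ≤ p := by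
    have hsq : γ ^ 2 ≤ (Real.sqrt p / Real.sqrt (6 * ρnc)) ^ 2 := pow_le_pow_left₀ hγ0.le h3γ 2
    rw [div_pow, Real.sq_sqrt hp0.le, Real.sq_sqrt (by positivity)] at hsq
    rw [le_div_iff₀ (by positivity)] at hsq
    linarith
  -- Lyapunov constant
  set c : ℝ := 3 * L * ρnc * γ ^ 2 / (2 * p) with hcdef
  have hc0 : 0 ≤ c := by rw [hcdef]; positivity
  have hc2 : c * (2 * p) = 3 * L * ρnc * γ ^ 2 := by
    rw [hcdef]; field_simp
  set Gd := gradient (favg f) with hGd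
  set Φ : EuclideanSpace ℝ (Fin d) × EuclideanSpace ℝ (Fin d) → ℝ :=
    fun s => (favg f s.1 - fstar) + c * ‖s.1 - s.2‖ ^ 2 with hΦdef
  set ψ : EuclideanSpace ℝ (Fin d) × EuclideanSpace ℝ (Fin d) → ℝ :=
    fun s => (γ/2) * ‖Gd s.1‖ ^ 2 with hψdef
  set φg : EuclideanSpace ℝ (Fin d) × EuclideanSpace ℝ (Fin d) → ℝ :=
    fun s => ‖Gd s.1‖ ^ 2 with hφgdef
  set φf : EuclideanSpace ℝ (Fin d) × EuclideanSpace ℝ (Fin d) → ℝ :=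
    fun s => favg f s.1 - fstar with hφfdef
  have hstep : ∀ s, lsvrgE1 f γ p Φ s ≤ Φ s - ψ s := by
    rintro ⟨a, b⟩
    have h := onestep hN f hdiff L hL hsmooth fstar ρnc hρnc hres p γ hp0 hp1 hγ0
      h4L h36 h6 c hc0 hc2 a b
    simp only [hΦdef, hψdef, hGd]
    linarith [h]
  have hΦ0 : ∀ s, 0 ≤ Φ s := fun s =>
    add_nonneg (sub_nonneg.mpr (hfs s.1)) (mul_nonneg hc0 (by positivity))
  have htel : ∀ (K' : ℕ) y, ∑ u ∈ Finset.range K', lsvrgExp f γ p u ψ (y, y)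
      ≤ favg f y - fstar := by
    intro K' y
    have h := lsvrg_telescope hp0.le hp1 Φ ψ hΦ0 hstep K' (y, y)
    have hΦyy : Φ (y, y) = favg f y - fstar := by simp [hΦdef]
    linarith [h, hΦyy.le, hΦyy.ge]
  have hK0' : (0:ℝ) < (K:ℝ) := by exact_mod_cast hK0
  -- average gradient norm bound over one inner run
  have keyG : ∀ y, (K:ℝ)⁻¹ * ∑ u ∈ Finset.range K, lsvrgExp f γ p u φg (y, y)
      ≤ (μ/2) * (favg f y - fstar) := by
    intro y
    have hsum : ∑ u ∈ Finset.range K, lsvrgExp f γ p u ψ (y, y)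
        = (γ/2) * ∑ u ∈ Finset.range K, lsvrgExp f γ p u φg (y, y) := by
      rw [Finset.mul_sum]
      apply Finset.sum_congr rfl
      intro u _
      exact lsvrgExp_const_mul (γ/2) φg u (y, y)
    have h1 : (γ/2) * ∑ u ∈ Finset.range K, lsvrgExp f γ p u φg (y, y)
        ≤ favg f y - fstar := by rw [← hsum]; exact htel K y
    have h4 : 4 ≤ μ * γ * (K:ℝ) := by
      rw [div_le_iff₀ (by positivity : (0:ℝ) < μ * γ)] at hK
      linarith
    have hF0 : 0 ≤ favg f y - fstar := sub_nonneg.mpr (hfs y)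
    have hS0 : 0 ≤ ∑ u ∈ Finset.range K, lsvrgExp f γ p u φg (y, y) :=
      Finset.sum_nonneg fun u _ =>
        lsvrgExp_nonneg (f := f) (γ := γ) hp0.le hp1 (fun s => by positivity) u (y, y)
    rw [inv_mul_le_iff₀ hK0']
    have h2F : γ * ∑ u ∈ Finset.range K, lsvrgExp f γ p u φg (y, y)
        ≤ 2 * (favg f y - fstar) := by linarith [h1]
    have h3F : 2 * (favg f y - fstar)
        ≤ γ * ((K:ℝ) * ((μ/2) * (favg f y - fstar))) := by
      nlinarith [mul_nonneg (show (0:ℝ) ≤ μ*γ*(K:ℝ) - 4 by linarith) hF0]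
    exact le_of_mul_le_mul_left (h2F.trans h3F) hγ0
  have hPL' : ∀ z, favg f z - fstar ≤ (1/(2*μ)) * ‖Gd z‖ ^ 2 := by
    intro z
    have h := hPL z
    rw [hGd]
    have hμ' : (0:ℝ) < 2 * μ := by linarith
    rw [show (1/(2*μ)) * ‖gradient (favg f) z‖ ^ 2
      = ‖gradient (favg f) z‖ ^ 2 / (2*μ) by ring, le_div_iff₀ hμ']
    linarith [h]
  -- function value bound for the output distribution
  have keyF : ∀ y, (K:ℝ)⁻¹ * ∑ u ∈ Finset.range K, lsvrgExp f γ p u φf (y, y)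
      ≤ (1/2) * (favg f y - fstar) := by
    intro y
    have hpt : ∀ s, φf s ≤ (1/(2*μ)) * φg s := fun s => hPL' s.1
    have hsum : ∑ u ∈ Finset.range K, lsvrgExp f γ p u φf (y, y)
        ≤ (1/(2*μ)) * ∑ u ∈ Finset.range K, lsvrgExp f γ p u φg (y, y) := by
      rw [Finset.mul_sum]
      apply Finset.sum_le_sum
      intro u _
      calc lsvrgExp f γ p u φf (y, y)
          ≤ lsvrgExp f γ p u (fun s => (1/(2*μ)) * φg s) (y, y) :=
            lsvrgExp_mono hp0.le hp1 hpt u (y, y)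
        _ = (1/(2*μ)) * lsvrgExp f γ p u φg (y, y) := lsvrgExp_const_mul _ _ u (y, y)
    have h2 : (K:ℝ)⁻¹ * ∑ u ∈ Finset.range K, lsvrgExp f γ p u φf (y, y)
        ≤ (K:ℝ)⁻¹ * ((1/(2*μ)) * ∑ u ∈ Finset.range K, lsvrgExp f γ p u φg (y, y)) :=
      mul_le_mul_of_nonneg_left hsum (by positivity)
    have h3 : (K:ℝ)⁻¹ * ((1/(2*μ)) * ∑ u ∈ Finset.range K, lsvrgExp f γ p u φg (y, y))
        = (1/(2*μ)) * ((K:ℝ)⁻¹ * ∑ u ∈ Finset.range K, lsvrgExp f γ p u φg (y, y)) := by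
      ring
    have h4 := mul_le_mul_of_nonneg_left (keyG y) (by positivity : (0:ℝ) ≤ 1/(2*μ))
    have hF0 : 0 ≤ favg f y - fstar := sub_nonneg.mpr (hfs y)
    have h5 : (1/(2*μ)) * ((μ/2) * (favg f y - fstar)) = (1/4) * (favg f y - fstar) := by
      field_simp; ring
    linarith [h2, h4, h3.le, h3.ge]
  have keyG2 : ∀ y, (K:ℝ)⁻¹ * ∑ u ∈ Finset.range K, lsvrgExp f γ p u φg (y, y)
      ≤ (1/2) * ‖Gd y‖ ^ 2 := by
    intro y
    have h1 := keyG y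
    have h2 := hPL' y
    have h3 : (0:ℝ) ≤ ‖Gd y‖ ^ 2 := by positivity
    have h4 : (μ/2) * (favg f y - fstar) ≤ (μ/2) * ((1/(2*μ)) * ‖Gd y‖ ^ 2) :=
      mul_le_mul_of_nonneg_left h2 (by positivity)
    have h5 : (μ/2) * ((1/(2*μ)) * ‖Gd y‖ ^ 2) = (1/4) * ‖Gd y‖ ^ 2 := by
      field_simp; ring
    linarith
  -- outer induction
  have main : ∀ T : ℕ, ∀ y,
      restartExp f γ p K T (fun z => favg f z - fstar) y
          ≤ (1 / 2 : ℝ) ^ T * (favg f y - fstar) ∧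
      restartExp f γ p K T (fun z => ‖gradient (favg f) z‖ ^ 2) y
          ≤ (1 / 2 : ℝ) ^ T * ‖gradient (favg f) y‖ ^ 2 := by
    intro T
    induction T with
    | zero =>
      intro y
      constructor
      · have h0 : restartExp f γ p K 0 (fun z => favg f z - fstar) y
            = favg f y - fstar := rfl
        rw [h0]; simp
      · have h0 : restartExp f γ p K 0 (fun z => ‖gradient (favg f) z‖ ^ 2) y
            = ‖gradient (favg f) y‖ ^ 2 := rfl
        rw [h0]; simp
    | succ T ih =>
      intro y
      constructor
      · have h0 : restartExp f γ p K (T+1) (fun z => favg f z - fstar) y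
            = (K:ℝ)⁻¹ * ∑ u ∈ Finset.range K,
                lsvrgExp f γ p u
                  (fun s => restartExp f γ p K T (fun z => favg f z - fstar) s.1) (y, y) := rfl
        rw [h0]
        have hpt : ∀ s : EuclideanSpace ℝ (Fin d) × EuclideanSpace ℝ (Fin d),
            restartExp f γ p K T (fun z => favg f z - fstar) s.1
              ≤ (1/2:ℝ)^T * φf s := fun s => (ih s.1).1
        have h1 : ∀ u, lsvrgExp f γ p u
              (fun s => restartExp f γ p K T (fun z => favg f z - fstar) s.1) (y, y)
            ≤ (1/2:ℝ)^T * lsvrgExp f γ p u φf (y, y) := fun u =>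
          (lsvrgExp_mono hp0.le hp1 hpt u (y, y)).trans_eq
            (lsvrgExp_const_mul ((1/2:ℝ)^T) φf u (y, y))
        calc (K:ℝ)⁻¹ * ∑ u ∈ Finset.range K,
              lsvrgExp f γ p u
                (fun s => restartExp f γ p K T (fun z => favg f z - fstar) s.1) (y, y)
            ≤ (K:ℝ)⁻¹ * ∑ u ∈ Finset.range K,
                (1/2:ℝ)^T * lsvrgExp f γ p u φf (y, y) :=
              mul_le_mul_of_nonneg_left
                (Finset.sum_le_sum fun u _ => h1 u) (by positivity)
          _ = (1/2:ℝ)^T * ((K:ℝ)⁻¹ * ∑ u ∈ Finset.range K,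
                lsvrgExp f γ p u φf (y, y)) := by
              rw [← Finset.mul_sum]; ring
          _ ≤ (1/2:ℝ)^T * ((1/2) * (favg f y - fstar)) :=
              mul_le_mul_of_nonneg_left (keyF y) (by positivity)
          _ = (1/2:ℝ)^(T+1) * (favg f y - fstar) := by ring
      · have h0 : restartExp f γ p K (T+1) (fun z => ‖gradient (favg f) z‖ ^ 2) y
            = (K:ℝ)⁻¹ * ∑ u ∈ Finset.range K,
                lsvrgExp f γ p u
                  (fun s => restartExp f γ p K T
                    (fun z => ‖gradient (favg f) z‖ ^ 2) s.1) (y, y) := rfl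
        rw [h0]
        have hpt : ∀ s : EuclideanSpace ℝ (Fin d) × EuclideanSpace ℝ (Fin d),
            restartExp f γ p K T (fun z => ‖gradient (favg f) z‖ ^ 2) s.1
              ≤ (1/2:ℝ)^T * φg s := by
          intro s
          have := (ih s.1).2
          simp only [hφgdef, hGd]
          exact this
        have h1 : ∀ u, lsvrgExp f γ p u
              (fun s => restartExp f γ p K T (fun z => ‖gradient (favg f) z‖ ^ 2) s.1) (y, y)
            ≤ (1/2:ℝ)^T * lsvrgExp f γ p u φg (y, y) := fun u =>
          (lsvrgExp_mono hp0.le hp1 hpt u (y, y)).trans_eq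
            (lsvrgExp_const_mul ((1/2:ℝ)^T) φg u (y, y))
        have hGdy : ‖gradient (favg f) y‖ ^ 2 = ‖Gd y‖ ^ 2 := by rw [hGd]
        calc (K:ℝ)⁻¹ * ∑ u ∈ Finset.range K,
              lsvrgExp f γ p u
                (fun s => restartExp f γ p K T
                  (fun z => ‖gradient (favg f) z‖ ^ 2) s.1) (y, y)
            ≤ (K:ℝ)⁻¹ * ∑ u ∈ Finset.range K,
                (1/2:ℝ)^T * lsvrgExp f γ p u φg (y, y) :=
              mul_le_mul_of_nonneg_left
                (Finset.sum_le_sum fun u _ => h1 u) (by positivity)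
          _ = (1/2:ℝ)^T * ((K:ℝ)⁻¹ * ∑ u ∈ Finset.range K,
                lsvrgExp f γ p u φg (y, y)) := by
              rw [← Finset.mul_sum]; ring
          _ ≤ (1/2:ℝ)^T * ((1/2) * ‖Gd y‖ ^ 2) :=
              mul_le_mul_of_nonneg_left (keyG2 y) (by positivity)
          _ = (1/2:ℝ)^(T+1) * ‖gradient (favg f) y‖ ^ 2 := by rw [hGdy]; ring
  intro T
  exact main T x0


end
end
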